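/- (Complex Bussgang identity.) Let G1, G2, G3, G4 be i.i.d. real standard normal random variables, let r, s ∈ ℝ with r² + s² ≤ 1, and set U1 = G1, U2 = G2, V1 = r G1 + s G2 + √(1 − r² − s²) G3, V2 = −s G1 + r G2 + √(1 − r² − s²) G4. Then E[ (sgn(U1) + j·sgn(U2)) · (V1 − j·V2) ] = 2√(2/π) · (r + j·s). -/

import Mathlib

open MeasureTheory ProbabilityTheory Complex

open scoped NNReal ENNReal Topology

section Aux

open Set Filter

lemma measurable_realSign : Measurable Real.sign := by
  unfold Real.sign
  refine Measurable.ite (measurableSet_lt measurable_id measurable_const) measurable_const ?_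
  exact Measurable.ite (measurableSet_lt measurable_const measurable_id) measurable_const
    measurable_const

lemma mySign_mul_self (x : ℝ) : Real.sign x * x = |x| := by
  rcases lt_trichotomy x 0 with h | h | h
  · rw [Real.sign_of_neg h, abs_of_neg h]; ring
  · simp [h]
  · rw [Real.sign_of_pos h, abs_of_pos h]; ring

lemma aux_Ioi : ∫ x in Ioi (0:ℝ), x * Real.exp (-(1/2) * x ^ 2) = 1 := by
  have A : ∀ x : ℝ, HasDerivAt (fun y : ℝ => -Real.exp (-(1/2) * y ^ 2))
      (x * Real.exp (-(1/2) * x ^ 2)) x := by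
    intro x
    have h1 : HasDerivAt (fun y : ℝ => -(1/2 : ℝ) * y ^ 2) (-(1/2 : ℝ) * (2 * x)) x := by
      simpa using (hasDerivAt_pow 2 x).const_mul (-(1/2 : ℝ))
    have h2 := h1.exp.neg
    exact h2.congr_deriv (by ring)
  have B : Tendsto (fun y : ℝ => -Real.exp (-(1/2) * y ^ 2)) atTop (𝓝 (-0)) := by
    refine Tendsto.neg ?_
    refine Real.tendsto_exp_atBot.comp ?_
    exact (tendsto_pow_atTop two_ne_zero).const_mul_atTop_of_neg (by norm_num)
  have hint : IntegrableOn (fun x : ℝ => x * Real.exp (-(1/2) * x ^ 2)) (Ioi 0) :=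
    (integrable_mul_exp_neg_mul_sq (by norm_num : (0:ℝ) < 1/2)).integrableOn
  have := integral_Ioi_of_hasDerivAt_of_tendsto' (a := 0)
    (fun x _ => A x) hint (by simpa using B)
  simpa using this

lemma gauss_integral_eq (g : ℝ → ℝ) :
    ∫ x, g x ∂(gaussianReal 0 1) = ∫ x, gaussianPDFReal 0 1 x * g x := by
  rw [gaussianReal_of_var_ne_zero 0 one_ne_zero]
  have hpdf : gaussianPDF 0 1
      = fun x => ((Real.toNNReal (gaussianPDFReal 0 1 x) : ℝ≥0) : ENNReal) := rfl
  rw [hpdf, integral_withDensity_eq_integral_smul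
    ((measurable_gaussianPDFReal 0 1).real_toNNReal) g]
  congr 1
  ext x
  rw [NNReal.smul_def, Real.coe_toNNReal _ (gaussianPDFReal_nonneg 0 1 x)]
  rfl

lemma gauss_pdf_eq (x : ℝ) :
    gaussianPDFReal 0 1 x = (Real.sqrt (2 * Real.pi))⁻¹ * Real.exp (-(1/2) * x ^ 2) := by
  simp only [gaussianPDFReal, NNReal.coe_one, mul_one, sub_zero]
  ring_nf

lemma gauss_integral_id : ∫ x, x ∂(gaussianReal 0 1) = 0 := by
  rw [gauss_integral_eq]
  have h : ∫ x : ℝ, gaussianPDFReal 0 1 x * x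
      = ∫ x : ℝ, gaussianPDFReal 0 1 (-x) * (-x) := by
    exact (integral_neg_eq_self _ _).symm
  have h2 : ∀ x : ℝ, gaussianPDFReal 0 1 (-x) * (-x) = -(gaussianPDFReal 0 1 x * x) := by
    intro x
    rw [gauss_pdf_eq, gauss_pdf_eq]
    rw [show (-x) ^ 2 = x ^ 2 by ring]
    ring
  simp_rw [h2, integral_neg] at h
  linarith

lemma gauss_integral_abs : ∫ x, |x| ∂(gaussianReal 0 1) = Real.sqrt (2 / Real.pi) := by
  rw [gauss_integral_eq]
  have h : ∀ x : ℝ, gaussianPDFReal 0 1 x * |x|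
      = (fun t => (Real.sqrt (2 * Real.pi))⁻¹ * (t * Real.exp (-(1/2) * t ^ 2))) |x| := by
    intro x
    rw [gauss_pdf_eq]
    simp only
    rw [show |x| ^ 2 = x ^ 2 from sq_abs x]
    ring
  simp_rw [h]
  rw [integral_comp_abs (f := fun t => (Real.sqrt (2 * Real.pi))⁻¹ *
      (t * Real.exp (-(1/2) * t ^ 2)))]
  rw [integral_const_mul, aux_Ioi, mul_one]
  have h2 : Real.sqrt 2 ≠ 0 := by positivity
  have hπ : Real.sqrt Real.pi ≠ 0 := by positivity
  have h22 : Real.sqrt 2 * Real.sqrt 2 = 2 := Real.mul_self_sqrt (by norm_num)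
  rw [Real.sqrt_div (by norm_num : (0:ℝ) ≤ 2), Real.sqrt_mul (by norm_num : (0:ℝ) ≤ 2)]
  field_simp
  nlinarith [Real.sqrt_nonneg Real.pi, Real.sqrt_nonneg 2]

lemma gauss_integrable_id : Integrable (fun x : ℝ => x) (gaussianReal 0 1) := by
  rw [gaussianReal_of_var_ne_zero 0 one_ne_zero]
  have hpdf : gaussianPDF 0 1
      = fun x => ((Real.toNNReal (gaussianPDFReal 0 1 x) : ℝ≥0) : ENNReal) := rfl
  rw [hpdf, integrable_withDensity_iff_integrable_smul
    ((measurable_gaussianPDFReal 0 1).real_toNNReal)]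
  have h : (fun x : ℝ => (Real.toNNReal (gaussianPDFReal 0 1 x)) • x)
      = fun x => (Real.sqrt (2 * Real.pi))⁻¹ * (x * Real.exp (-(1/2) * x ^ 2)) := by
    funext x
    rw [NNReal.smul_def, smul_eq_mul, Real.coe_toNNReal _ (gaussianPDFReal_nonneg 0 1 x),
      gauss_pdf_eq]
    ring
  rw [h]
  exact (integrable_mul_exp_neg_mul_sq (by norm_num : (0:ℝ) < 1/2)).const_mul _

end Aux

/-- **Complex Bussgang identity.**
Let `G1, G2, G3, G4` be i.i.d. real standard normal random variables, let `r s : ℝ` with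
`r² + s² ≤ 1`, and set `U1 = G1`, `U2 = G2`,
`V1 = r G1 + s G2 + √(1 − r² − s²) G3`, `V2 = −s G1 + r G2 + √(1 − r² − s²) G4`.  Then
`E[(sgn U1 + j sgn U2)(V1 − j V2)] = 2 √(2/π) (r + j s)`. -/
theorem complex_bussgang
    {Ω : Type*} [MeasurableSpace Ω] (μ : Measure Ω) [IsProbabilityMeasure μ]
    (G : Fin 4 → Ω → ℝ) (hmeas : ∀ i, Measurable (G i))
    (hindep : iIndepFun G μ)
    (hgauss : ∀ i, Measure.map (G i) μ = gaussianReal 0 1)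
    (r s : ℝ) (hrs : r ^ 2 + s ^ 2 ≤ 1) :
    ∫ ω,
        (((Real.sign (G 0 ω) : ℝ) : ℂ) + Complex.I * ((Real.sign (G 1 ω) : ℝ) : ℂ)) *
          (((r * G 0 ω + s * G 1 ω + Real.sqrt (1 - r ^ 2 - s ^ 2) * G 2 ω : ℝ) : ℂ) -
            Complex.I * ((-s * G 0 ω + r * G 1 ω +
                Real.sqrt (1 - r ^ 2 - s ^ 2) * G 3 ω : ℝ) : ℂ)) ∂μ =
      ((2 * Real.sqrt (2 / Real.pi) : ℝ) : ℂ) * (((r : ℝ) : ℂ) + Complex.I * ((s : ℝ) : ℂ)) := by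
  set a : ℝ := Real.sqrt (1 - r ^ 2 - s ^ 2) with ha
  -- basic integrability
  have hIntG : ∀ i, Integrable (G i) μ := by
    intro i
    have h1 : Integrable (fun x : ℝ => x) (Measure.map (G i) μ) := by
      rw [hgauss i]; exact gauss_integrable_id
    have := (integrable_map_measure h1.aestronglyMeasurable (hmeas i).aemeasurable).mp h1
    exact this
  have hSbd : ∀ t : ℝ, ‖Real.sign t‖ ≤ 1 := by
    intro t
    rcases Real.sign_apply_eq t with h | h | h <;> simp [h]
  have hIntS : ∀ i, Integrable (fun ω => Real.sign (G i ω)) μ := by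
    intro i
    refine Integrable.mono' (integrable_const (1 : ℝ))
      ((measurable_realSign.comp (hmeas i)).aestronglyMeasurable) ?_
    filter_upwards with ω using hSbd _
  have hT : ∀ i j : Fin 4, Integrable (fun ω => Real.sign (G i ω) * G j ω) μ := by
    intro i j
    refine Integrable.mono' ((hIntG j).abs)
      (((measurable_realSign.comp (hmeas i)).mul (hmeas j)).aestronglyMeasurable) ?_
    filter_upwards with ω
    rw [norm_mul]
    calc ‖Real.sign (G i ω)‖ * ‖G j ω‖ ≤ 1 * ‖G j ω‖ :=
          mul_le_mul_of_nonneg_right (hSbd _) (norm_nonneg _)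
      _ = |G j ω| := by rw [one_mul, Real.norm_eq_abs]
  -- mean of each Gaussian is zero
  have hmean : ∀ j, ∫ ω, G j ω ∂μ = 0 := by
    intro j
    have h1 : ∫ ω, G j ω ∂μ = ∫ x, x ∂(Measure.map (G j) μ) :=
      (integral_map (hmeas j).aemeasurable measurable_id.aestronglyMeasurable).symm
    rw [h1, hgauss j, gauss_integral_id]
  -- same-index integral
  have hself : ∀ i, ∫ ω, Real.sign (G i ω) * G i ω ∂μ = Real.sqrt (2 / Real.pi) := by
    intro i
    have h1 : ∀ ω, Real.sign (G i ω) * G i ω = |G i ω| := fun ω => mySign_mul_self _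
    simp_rw [h1]
    have h2 : ∫ ω, |G i ω| ∂μ = ∫ x, |x| ∂(Measure.map (G i) μ) :=
      (integral_map (hmeas i).aemeasurable measurable_abs.aestronglyMeasurable).symm
    rw [h2, hgauss i, gauss_integral_abs]
  -- cross-index integral
  have hcross : ∀ i j : Fin 4, i ≠ j → ∫ ω, Real.sign (G i ω) * G j ω ∂μ = 0 := by
    intro i j hij
    have hind : IndepFun (Real.sign ∘ G i) (G j) μ :=
      (hindep.indepFun hij).comp measurable_realSign measurable_id
    have := IndepFun.integral_mul_eq_mul_integral hind (hIntS i).aestronglyMeasurable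
      (hIntG j).aestronglyMeasurable
    simp only [Pi.mul_apply, Function.comp] at this
    rw [show (fun ω => Real.sign (G i ω) * G j ω)
        = fun ω => (Real.sign ∘ G i) ω * G j ω from rfl]
    simpa [hmean j] using this
  have h00 := hself 0
  have h11 := hself 1
  have h01 := hcross 0 1 (by decide)
  have h02 := hcross 0 2 (by decide)
  have h03 := hcross 0 3 (by decide)
  have h10 := hcross 1 0 (by decide)
  have h12 := hcross 1 2 (by decide)
  have h13 := hcross 1 3 (by decide)
  -- integrability of scaled terms
  have i1 : Integrable (fun ω => r * (Real.sign (G 0 ω) * G 0 ω)) μ := (hT 0 0).const_mul r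
  have i2 : Integrable (fun ω => s * (Real.sign (G 0 ω) * G 1 ω)) μ := (hT 0 1).const_mul s
  have i3 : Integrable (fun ω => a * (Real.sign (G 0 ω) * G 2 ω)) μ := (hT 0 2).const_mul a
  have i4 : Integrable (fun ω => -s * (Real.sign (G 1 ω) * G 0 ω)) μ := (hT 1 0).const_mul (-s)
  have i5 : Integrable (fun ω => r * (Real.sign (G 1 ω) * G 1 ω)) μ := (hT 1 1).const_mul r
  have i6 : Integrable (fun ω => a * (Real.sign (G 1 ω) * G 3 ω)) μ := (hT 1 3).const_mul a
  have j1 : Integrable (fun ω => r * (Real.sign (G 1 ω) * G 0 ω)) μ := (hT 1 0).const_mul r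
  have j2 : Integrable (fun ω => s * (Real.sign (G 1 ω) * G 1 ω)) μ := (hT 1 1).const_mul s
  have j3 : Integrable (fun ω => a * (Real.sign (G 1 ω) * G 2 ω)) μ := (hT 1 2).const_mul a
  have j4 : Integrable (fun ω => s * (Real.sign (G 0 ω) * G 0 ω)) μ := (hT 0 0).const_mul s
  have j5 : Integrable (fun ω => -r * (Real.sign (G 0 ω) * G 1 ω)) μ := (hT 0 1).const_mul (-r)
  have j6 : Integrable (fun ω => -a * (Real.sign (G 0 ω) * G 3 ω)) μ := (hT 0 3).const_mul (-a)
  have i12 : Integrable (fun ω => r * (Real.sign (G 0 ω) * G 0 ω)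
      + s * (Real.sign (G 0 ω) * G 1 ω)) μ := i1.add i2
  have i123 : Integrable (fun ω => r * (Real.sign (G 0 ω) * G 0 ω)
      + s * (Real.sign (G 0 ω) * G 1 ω) + a * (Real.sign (G 0 ω) * G 2 ω)) μ := i12.add i3
  have i1234 : Integrable (fun ω => r * (Real.sign (G 0 ω) * G 0 ω)
      + s * (Real.sign (G 0 ω) * G 1 ω) + a * (Real.sign (G 0 ω) * G 2 ω)
      + -s * (Real.sign (G 1 ω) * G 0 ω)) μ := i123.add i4
  have i12345 : Integrable (fun ω => r * (Real.sign (G 0 ω) * G 0 ω)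
      + s * (Real.sign (G 0 ω) * G 1 ω) + a * (Real.sign (G 0 ω) * G 2 ω)
      + -s * (Real.sign (G 1 ω) * G 0 ω) + r * (Real.sign (G 1 ω) * G 1 ω)) μ := i1234.add i5
  have j12 : Integrable (fun ω => r * (Real.sign (G 1 ω) * G 0 ω)
      + s * (Real.sign (G 1 ω) * G 1 ω)) μ := j1.add j2
  have j123 : Integrable (fun ω => r * (Real.sign (G 1 ω) * G 0 ω)
      + s * (Real.sign (G 1 ω) * G 1 ω) + a * (Real.sign (G 1 ω) * G 2 ω)) μ := j12.add j3
  have j1234 : Integrable (fun ω => r * (Real.sign (G 1 ω) * G 0 ω)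
      + s * (Real.sign (G 1 ω) * G 1 ω) + a * (Real.sign (G 1 ω) * G 2 ω)
      + s * (Real.sign (G 0 ω) * G 0 ω)) μ := j123.add j4
  have j12345 : Integrable (fun ω => r * (Real.sign (G 1 ω) * G 0 ω)
      + s * (Real.sign (G 1 ω) * G 1 ω) + a * (Real.sign (G 1 ω) * G 2 ω)
      + s * (Real.sign (G 0 ω) * G 0 ω) + -r * (Real.sign (G 0 ω) * G 1 ω)) μ := j1234.add j5
  set f : Ω → ℝ := fun ω =>
    r * (Real.sign (G 0 ω) * G 0 ω) + s * (Real.sign (G 0 ω) * G 1 ω)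
      + a * (Real.sign (G 0 ω) * G 2 ω) + -s * (Real.sign (G 1 ω) * G 0 ω)
      + r * (Real.sign (G 1 ω) * G 1 ω) + a * (Real.sign (G 1 ω) * G 3 ω) with hf
  set g : Ω → ℝ := fun ω =>
    r * (Real.sign (G 1 ω) * G 0 ω) + s * (Real.sign (G 1 ω) * G 1 ω)
      + a * (Real.sign (G 1 ω) * G 2 ω) + s * (Real.sign (G 0 ω) * G 0 ω)
      + -r * (Real.sign (G 0 ω) * G 1 ω) + -a * (Real.sign (G 0 ω) * G 3 ω) with hg
  have hfI : Integrable f μ := i12345.add i6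
  have hgI : Integrable g μ := j12345.add j6
  have hfval : ∫ ω, f ω ∂μ = 2 * r * Real.sqrt (2 / Real.pi) := by
    rw [hf]
    rw [integral_add i12345 i6]
    rw [integral_add i1234 i5]
    rw [integral_add i123 i4]
    rw [integral_add i12 i3]
    rw [integral_add i1 i2]
    simp_rw [integral_const_mul]
    rw [h00, h01, h02, h10, h11, h13]
    ring
  have hgval : ∫ ω, g ω ∂μ = 2 * s * Real.sqrt (2 / Real.pi) := by
    rw [hg]
    rw [integral_add j12345 j6]
    rw [integral_add j1234 j5]
    rw [integral_add j123 j4]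
    rw [integral_add j12 j3]
    rw [integral_add j1 j2]
    simp_rw [integral_const_mul]
    rw [h00, h01, h03, h10, h11, h12]
    ring
  calc
    ∫ ω,
        (((Real.sign (G 0 ω) : ℝ) : ℂ) + Complex.I * ((Real.sign (G 1 ω) : ℝ) : ℂ)) *
          (((r * G 0 ω + s * G 1 ω + a * G 2 ω : ℝ) : ℂ) -
            Complex.I * ((-s * G 0 ω + r * G 1 ω + a * G 3 ω : ℝ) : ℂ)) ∂μ
      = ∫ ω, ((f ω : ℝ) : ℂ) + ((g ω : ℝ) : ℂ) * Complex.I ∂μ := by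
        apply integral_congr_ae
        filter_upwards with ω
        rw [hf, hg]
        push_cast
        ring_nf
        simp only [Complex.I_sq]
        ring
    _ = ((∫ ω, f ω ∂μ : ℝ) : ℂ) + ((∫ ω, g ω ∂μ : ℝ) : ℂ) * Complex.I := by
        rw [integral_add (μ := μ) (f := fun ω => ((f ω : ℝ) : ℂ))
          (g := fun ω => ((g ω : ℝ) : ℂ) * Complex.I)
          (by exact hfI.ofReal) (by exact (hgI.ofReal.mul_const Complex.I))]
        congr 1
        · exact integral_ofReal
        · rw [integral_mul_const]
          congr 1
          exact integral_ofReal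
    _ = ((2 * Real.sqrt (2 / Real.pi) : ℝ) : ℂ) * (((r : ℝ) : ℂ) + Complex.I * ((s : ℝ) : ℂ)) := by
        rw [hfval, hgval]
        push_cast
        ring
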